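/- For every m ≥ 1, the quaternionic Appell polynomials satisfy the Appell property (1/2)·(∂Q_m/∂x₀ − e₁·∂Q_m/∂x₁ − e₂·∂Q_m/∂x₂ − e₃·∂Q_m/∂x₃) = m·Q_{m−1} at every point of ℍ. -/

import Mathlib

open Quaternion

noncomputable section

/-- The quaternion unit `e₁`. -/
def e1 : ℍ[ℝ] := ⟨0, 1, 0, 0⟩

/-- The quaternion unit `e₂`. -/
def e2 : ℍ[ℝ] := ⟨0, 0, 1, 0⟩

/-- The quaternion unit `e₃`. -/
def e3 : ℍ[ℝ] := ⟨0, 0, 0, 1⟩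

/-- The coefficients `T^m_j = 2(m-j+1)/((m+1)(m+2))`. -/
def appellT (m j : ℕ) : ℝ :=
  (2 * ((m : ℝ) - (j : ℝ) + 1)) / (((m : ℝ) + 1) * ((m : ℝ) + 2))

/-- The `m`-th quaternionic Appell polynomial
`Q_m(x) = Σ_{j=0}^m T^m_j x^{m-j} x̄^j`. -/
def appellQ (m : ℕ) (x : ℍ[ℝ]) : ℍ[ℝ] :=
  ∑ j ∈ Finset.range (m + 1), appellT m j • (x ^ (m - j) * (star x) ^ j)

/-- The conjugate Cauchy–Fueter operator
`D̄f = ∂f/∂x₀ - e₁ ∂f/∂x₁ - e₂ ∂f/∂x₂ - e₃ ∂f/∂x₃`. -/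
def fueterDBar (f : ℍ[ℝ] → ℍ[ℝ]) (x : ℍ[ℝ]) : ℍ[ℝ] :=
  fderiv ℝ f x 1 - e1 * fderiv ℝ f x e1 - e2 * fderiv ℝ f x e2 - e3 * fderiv ℝ f x e3

open Finset

/-! ### Auxiliary material -/

instance : StarModule ℝ ℍ[ℝ] := ⟨fun r x => by ext <;> simp⟩

/-- Derivative of `y ↦ y ^ n` as a continuous linear map. -/
def dpow (n : ℕ) (x : ℍ[ℝ]) : ℍ[ℝ] →L[ℝ] ℍ[ℝ] :=
  ∑ i ∈ Finset.range n,
    (ContinuousLinearMap.mul ℝ ℍ[ℝ] (x ^ i)).comp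
      ((ContinuousLinearMap.mul ℝ ℍ[ℝ]).flip (x ^ (n - 1 - i)))

lemma dpow_apply (n : ℕ) (x v : ℍ[ℝ]) :
    dpow n x v = ∑ i ∈ Finset.range n, x ^ i * (v * x ^ (n - 1 - i)) := by
  simp [dpow]

lemma hasFDerivAt_npow (n : ℕ) (x : ℍ[ℝ]) :
    HasFDerivAt (fun y : ℍ[ℝ] => y ^ n) (dpow n x) x := by
  induction n with
  | zero => simpa [dpow] using hasFDerivAt_const (1 : ℍ[ℝ]) x
  | succ n ih =>
    have h := ih.fun_mul' (hasFDerivAt_id x)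
    simp only [id_eq] at h
    have he : (fun y : ℍ[ℝ] => y ^ n * y) = fun y : ℍ[ℝ] => y ^ (n + 1) := by
      funext y; rw [← pow_succ]
    rw [he] at h
    have hD : x ^ n • ContinuousLinearMap.id ℝ ℍ[ℝ] + (dpow n x).smulRight x
        = dpow (n + 1) x := by
      refine ContinuousLinearMap.ext fun v => ?_
      simp only [dpow_apply, ContinuousLinearMap.add_apply, ContinuousLinearMap.smul_apply,
        ContinuousLinearMap.coe_id', id_eq, ContinuousLinearMap.smulRight_apply, smul_eq_mul]
      rw [Finset.sum_range_succ, Finset.sum_mul, add_comm]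
      congr 1
      · refine Finset.sum_congr rfl fun i hi => ?_
        have hi' : i < n := Finset.mem_range.mp hi
        have hn : n + 1 - 1 - i = (n - 1 - i) + 1 := by omega
        rw [mul_assoc, mul_assoc, ← pow_succ, hn]
      · simp
    rw [← hD]
    exact h

/-- Derivative of `y ↦ y ^ a * (star y) ^ b` as a continuous linear map. -/
def dmix (a b : ℕ) (x : ℍ[ℝ]) : ℍ[ℝ] →L[ℝ] ℍ[ℝ] :=
  x ^ a • ((dpow b (star x)).comp (((starL' ℝ : ℍ[ℝ] ≃L[ℝ] ℍ[ℝ]) : ℍ[ℝ] →L[ℝ] ℍ[ℝ])))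
    + (dpow a x).smulRight ((star x) ^ b)

lemma hasFDerivAt_mix (a b : ℕ) (x : ℍ[ℝ]) :
    HasFDerivAt (fun y : ℍ[ℝ] => y ^ a * (star y) ^ b) (dmix a b x) x := by
  have hs : HasFDerivAt (fun y : ℍ[ℝ] => star y)
      (((starL' ℝ : ℍ[ℝ] ≃L[ℝ] ℍ[ℝ]) : ℍ[ℝ] →L[ℝ] ℍ[ℝ])) x := by
    simpa using (hasFDerivAt_id x).star
  have h2 : HasFDerivAt (fun y : ℍ[ℝ] => (star y) ^ b)
      ((dpow b (star x)).comp (((starL' ℝ : ℍ[ℝ] ≃L[ℝ] ℍ[ℝ]) : ℍ[ℝ] →L[ℝ] ℍ[ℝ]))) x :=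
    (hasFDerivAt_npow b (star x)).comp x hs
  exact (hasFDerivAt_npow a x).mul' h2

/-- The "pow part" of the derivative of a single Appell summand. -/
def pPart (m j : ℕ) (x v : ℍ[ℝ]) : ℍ[ℝ] :=
  (∑ i ∈ range (m - j), x ^ i * (v * x ^ (m - j - 1 - i))) * (star x) ^ j

/-- The "star part" of the derivative of a single Appell summand. -/
def sPart (m j : ℕ) (x v : ℍ[ℝ]) : ℍ[ℝ] :=
  x ^ (m - j) * ∑ i ∈ range j, (star x) ^ i * (star v * (star x) ^ (j - 1 - i))

lemma dmix_apply (m j : ℕ) (x v : ℍ[ℝ]) :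
    dmix (m - j) j x v = pPart m j x v + sPart m j x v := by
  simp only [dmix, pPart, sPart, ContinuousLinearMap.add_apply, ContinuousLinearMap.smul_apply,
    ContinuousLinearMap.comp_apply, ContinuousLinearMap.coe_coe, starL'_apply,
    ContinuousLinearMap.smulRight_apply, dpow_apply, smul_eq_mul]
  rw [add_comm]
  simp [starL'_apply]

lemma hasFDerivAt_appellQ (m : ℕ) (x : ℍ[ℝ]) :
    HasFDerivAt (appellQ m)
      (∑ j ∈ Finset.range (m + 1), appellT m j • dmix (m - j) j x) x := by
  have h : appellQ m = fun x => ∑ j ∈ Finset.range (m + 1),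
      appellT m j • (x ^ (m - j) * (star x) ^ j) := rfl
  rw [h]
  exact HasFDerivAt.fun_sum fun j _ => (hasFDerivAt_mix (m - j) j x).const_smul (appellT m j)

lemma fderiv_appellQ_apply (m : ℕ) (x v : ℍ[ℝ]) :
    fderiv ℝ (appellQ m) x v
      = ∑ j ∈ Finset.range (m + 1), appellT m j • (pPart m j x v + sPart m j x v) := by
  rw [(hasFDerivAt_appellQ m x).fderiv]
  simp [dmix_apply]

/-! ### Pointwise quaternion identities -/

lemma lemA (p : ℍ[ℝ]) :
    p - e1 * p * e1 - e2 * p * e2 - e3 * p * e3 = (p + star p) + (p + star p) := by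
  ext <;> simp [Quaternion.re_mul, Quaternion.imI_mul, Quaternion.imJ_mul, Quaternion.imK_mul] <;> simp [e1, e2, e3] <;> ring

lemma lemB (p : ℍ[ℝ]) :
    p - e1 * (p * star e1) - e2 * (p * star e2) - e3 * (p * star e3)
      = -(star p + star p) := by
  ext <;> simp [Quaternion.re_mul, Quaternion.imI_mul, Quaternion.imJ_mul, Quaternion.imK_mul] <;> simp [e1, e2, e3] <;> ring

lemma commStar (x : ℍ[ℝ]) : Commute x (star x) := by
  unfold Commute SemiconjBy; ext <;> simp <;> ring

lemma keyP (p q r : ℍ[ℝ]) :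
    (p * (1 * q)) * r - e1 * ((p * (e1 * q)) * r) - e2 * ((p * (e2 * q)) * r)
      - e3 * ((p * (e3 * q)) * r)
    = (p + star p) * (q * r) + (p + star p) * (q * r) := by
  have h := lemA p
  calc (p * (1 * q)) * r - e1 * ((p * (e1 * q)) * r) - e2 * ((p * (e2 * q)) * r)
      - e3 * ((p * (e3 * q)) * r)
      = (p - e1 * p * e1 - e2 * p * e2 - e3 * p * e3) * (q * r) := by
        simp only [one_mul, sub_mul, mul_assoc]
    _ = ((p + star p) + (p + star p)) * (q * r) := by rw [h]
    _ = (p + star p) * (q * r) + (p + star p) * (q * r) := by rw [add_mul]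

lemma keyS (p1 p2 q : ℍ[ℝ]) :
    p1 * (p2 * (star (1 : ℍ[ℝ]) * q)) - e1 * (p1 * (p2 * (star e1 * q)))
      - e2 * (p1 * (p2 * (star e2 * q))) - e3 * (p1 * (p2 * (star e3 * q)))
    = -((star p2 * star p1) * q + (star p2 * star p1) * q) := by
  have h := lemB (p1 * p2)
  calc p1 * (p2 * (star (1 : ℍ[ℝ]) * q)) - e1 * (p1 * (p2 * (star e1 * q)))
      - e2 * (p1 * (p2 * (star e2 * q))) - e3 * (p1 * (p2 * (star e3 * q)))
      = ((p1 * p2) - e1 * ((p1 * p2) * star e1) - e2 * ((p1 * p2) * star e2)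
          - e3 * ((p1 * p2) * star e3)) * q := by
        simp only [star_one, one_mul, sub_mul, mul_assoc]
    _ = (-(star (p1 * p2) + star (p1 * p2))) * q := by rw [h]
    _ = -((star p2 * star p1) * q + (star p2 * star p1) * q) := by
        rw [star_mul]; rw [neg_mul, add_mul]

lemma keyP' (x : ℍ[ℝ]) (a j i : ℕ) (hi : i < a) :
    (x ^ i * (1 * x ^ (a - 1 - i))) * (star x) ^ j
      - e1 * ((x ^ i * (e1 * x ^ (a - 1 - i))) * (star x) ^ j)
      - e2 * ((x ^ i * (e2 * x ^ (a - 1 - i))) * (star x) ^ j)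
      - e3 * ((x ^ i * (e3 * x ^ (a - 1 - i))) * (star x) ^ j)
    = (x ^ (a - 1) * (star x) ^ j + x ^ (a - 1 - i) * (star x) ^ (i + j))
      + (x ^ (a - 1) * (star x) ^ j + x ^ (a - 1 - i) * (star x) ^ (i + j)) := by
  rw [keyP]
  have hc : (star x) ^ i * x ^ (a - 1 - i) = x ^ (a - 1 - i) * (star x) ^ i :=
    ((commStar x).symm.pow_pow i (a - 1 - i)).eq
  have hkey : (x ^ i + star (x ^ i)) * (x ^ (a - 1 - i) * (star x) ^ j)
      = x ^ (a - 1) * (star x) ^ j + x ^ (a - 1 - i) * (star x) ^ (i + j) := by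
    have h1 : i + (a - 1 - i) = a - 1 := by omega
    rw [add_mul, star_pow, ← mul_assoc, ← mul_assoc, hc, ← pow_add, mul_assoc, ← pow_add, h1]
  rw [hkey]

lemma keyS' (x : ℍ[ℝ]) (m j i : ℕ) (hj : j ≤ m) (hi : i < j) :
    x ^ (m - j) * ((star x) ^ i * (star (1 : ℍ[ℝ]) * (star x) ^ (j - 1 - i)))
      - e1 * (x ^ (m - j) * ((star x) ^ i * (star e1 * (star x) ^ (j - 1 - i))))
      - e2 * (x ^ (m - j) * ((star x) ^ i * (star e2 * (star x) ^ (j - 1 - i))))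
      - e3 * (x ^ (m - j) * ((star x) ^ i * (star e3 * (star x) ^ (j - 1 - i))))
    = -(x ^ i * (star x) ^ (m - 1 - i) + x ^ i * (star x) ^ (m - 1 - i)) := by
  rw [keyS]
  have hkey : (star ((star x) ^ i) * star (x ^ (m - j))) * (star x) ^ (j - 1 - i)
      = x ^ i * (star x) ^ (m - 1 - i) := by
    have h1 : m - j + (j - 1 - i) = m - 1 - i := by omega
    rw [star_pow, star_star, star_pow, mul_assoc, ← pow_add, h1]
  rw [hkey]

/-- The simplified value of the per-index combination. -/
def Zt (m j : ℕ) (x : ℍ[ℝ]) : ℍ[ℝ] :=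
  (∑ i ∈ range (m - j),
      (x ^ (m - j - 1) * (star x) ^ j + x ^ (m - j - 1 - i) * (star x) ^ (i + j)))
    - ∑ i ∈ range j, x ^ i * (star x) ^ (m - 1 - i)

lemma key (m j : ℕ) (x : ℍ[ℝ]) (hj : j ≤ m) :
    (pPart m j x 1 + sPart m j x 1) - e1 * (pPart m j x e1 + sPart m j x e1)
      - e2 * (pPart m j x e2 + sPart m j x e2) - e3 * (pPart m j x e3 + sPart m j x e3)
    = Zt m j x + Zt m j x := by
  have hP : pPart m j x 1 - e1 * pPart m j x e1 - e2 * pPart m j x e2 - e3 * pPart m j x e3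
      = ∑ i ∈ range (m - j),
        ((x ^ (m - j - 1) * (star x) ^ j + x ^ (m - j - 1 - i) * (star x) ^ (i + j))
          + (x ^ (m - j - 1) * (star x) ^ j + x ^ (m - j - 1 - i) * (star x) ^ (i + j))) := by
    simp only [pPart, Finset.sum_mul, Finset.mul_sum, ← Finset.sum_sub_distrib]
    exact Finset.sum_congr rfl fun i hi => keyP' x (m - j) j i (mem_range.mp hi)
  have hS : sPart m j x 1 - e1 * sPart m j x e1 - e2 * sPart m j x e2 - e3 * sPart m j x e3
      = ∑ i ∈ range j,
        -(x ^ i * (star x) ^ (m - 1 - i) + x ^ i * (star x) ^ (m - 1 - i)) := by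
    simp only [sPart, Finset.mul_sum, ← Finset.sum_sub_distrib]
    exact Finset.sum_congr rfl fun i hi => keyS' x m j i hj (mem_range.mp hi)
  have hrearr : (pPart m j x 1 + sPart m j x 1) - e1 * (pPart m j x e1 + sPart m j x e1)
      - e2 * (pPart m j x e2 + sPart m j x e2) - e3 * (pPart m j x e3 + sPart m j x e3)
      = (pPart m j x 1 - e1 * pPart m j x e1 - e2 * pPart m j x e2 - e3 * pPart m j x e3)
        + (sPart m j x 1 - e1 * sPart m j x e1 - e2 * sPart m j x e2
            - e3 * sPart m j x e3) := by
    simp only [mul_add]; abel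
  rw [hrearr, hP, hS]
  simp only [Finset.sum_add_distrib, Finset.sum_neg_distrib, Zt]
  abel

/-! ### Combinatorial lemmas -/

lemma tri {M : Type*} [AddCommMonoid M] (n : ℕ) (f : ℕ → ℕ → M) :
    ∑ j ∈ range n, ∑ i ∈ range (n - j), f j i
      = ∑ q ∈ range n, ∑ j ∈ range (q + 1), f j (q - j) := by
  induction n with
  | zero => simp
  | succ n ih =>
    have h1 : ∀ j ∈ range (n + 1), ∑ i ∈ range (n + 1 - j), f j i
        = ∑ i ∈ range (n - j), f j i + f j (n - j) := by
      intro j hj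
      have hj' : j < n + 1 := mem_range.mp hj
      have h2 : n + 1 - j = (n - j) + 1 := by omega
      rw [h2, Finset.sum_range_succ]
    rw [Finset.sum_congr rfl h1, Finset.sum_add_distrib,
      Finset.sum_range_succ (fun j => ∑ i ∈ range (n - j), f j i) n]
    simp only [Nat.sub_self, Finset.range_zero, Finset.sum_empty, add_zero]
    rw [ih, Finset.sum_range_succ (fun q => ∑ j ∈ range (q + 1), f j (q - j)) n,
      Finset.sum_range_succ (fun j => f j (n - j)) n]

lemma tri2 {M : Type*} [AddCommMonoid M] (n : ℕ) (g : ℕ → ℕ → M) :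
    ∑ j ∈ range (n + 1), ∑ i ∈ range j, g j i
      = ∑ i ∈ range n, ∑ k ∈ range (n - i), g (i + 1 + k) i := by
  induction n with
  | zero => simp
  | succ n ih =>
    rw [Finset.sum_range_succ]
    have h1 : ∀ i ∈ range (n + 1), ∑ k ∈ range (n + 1 - i), g (i + 1 + k) i
        = ∑ k ∈ range (n - i), g (i + 1 + k) i + g (n + 1) i := by
      intro i hi
      have hi' : i < n + 1 := mem_range.mp hi
      have h2 : n + 1 - i = (n - i) + 1 := by omega
      rw [h2, Finset.sum_range_succ]
      congr 2
      omega
    rw [Finset.sum_congr rfl h1, Finset.sum_add_distrib,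
      Finset.sum_range_succ (fun i => ∑ k ∈ range (n - i), g (i + 1 + k) i) n]
    simp only [Nat.sub_self, Finset.range_zero, Finset.sum_empty, add_zero]
    rw [ih]

lemma gauss (n : ℕ) (c : ℝ) :
    ∑ j ∈ range n, (c - (j : ℝ)) = (n : ℝ) * c - (n : ℝ) * ((n : ℝ) - 1) / 2 := by
  induction n with
  | zero => simp
  | succ n ih => rw [Finset.sum_range_succ, ih]; push_cast; ring

lemma coeff_id (m q : ℕ) (hm : 1 ≤ m) (hq : q < m) :
    appellT m q * ((m - q : ℕ) : ℝ) + (∑ j ∈ range (q + 1), appellT m j)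
      - (∑ k ∈ range (q + 1), appellT m (m - q + k)) = (m : ℝ) * appellT (m - 1) q := by
  have hqm : q ≤ m := le_of_lt hq
  have h1 : ∑ j ∈ range (q + 1), appellT m j
      = (((q : ℝ) + 1) * ((m : ℝ) + 1) - ((q : ℝ) + 1) * (((q : ℝ) + 1) - 1) / 2)
        * (2 / (((m : ℝ) + 1) * ((m : ℝ) + 2))) := by
    have e1 : ∀ j ∈ range (q + 1), appellT m j
        = ((((m : ℝ) + 1) - (j : ℝ))) * (2 / (((m : ℝ) + 1) * ((m : ℝ) + 2))) := by
      intro j _; rw [appellT]; ring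
    rw [Finset.sum_congr rfl e1, ← Finset.sum_mul, gauss (q + 1) ((m : ℝ) + 1)]
    push_cast; ring
  have h2 : ∑ k ∈ range (q + 1), appellT m (m - q + k)
      = (((q : ℝ) + 1) * (((q : ℝ) + 1)) - ((q : ℝ) + 1) * (((q : ℝ) + 1) - 1) / 2)
        * (2 / (((m : ℝ) + 1) * ((m : ℝ) + 2))) := by
    have e2 : ∀ k ∈ range (q + 1), appellT m (m - q + k)
        = ((((q : ℝ) + 1) - (k : ℝ))) * (2 / (((m : ℝ) + 1) * ((m : ℝ) + 2))) := by
      intro k _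
      rw [appellT]
      have hc : ((m - q + k : ℕ) : ℝ) = (m : ℝ) - (q : ℝ) + (k : ℝ) := by
        push_cast [Nat.cast_sub hqm]; ring
      rw [hc]; ring
    rw [Finset.sum_congr rfl e2, ← Finset.sum_mul, gauss (q + 1) ((q : ℝ) + 1)]
    push_cast; ring
  rw [h1, h2, appellT, appellT]
  have hc1 : ((m - q : ℕ) : ℝ) = (m : ℝ) - (q : ℝ) := by push_cast [Nat.cast_sub hqm]; ring
  have hc2 : ((m - 1 : ℕ) : ℝ) = (m : ℝ) - 1 := by push_cast [Nat.cast_sub hm]; ring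
  rw [hc1, hc2]
  have hm0 : (m : ℝ) ≠ 0 := by
    have h : (1 : ℝ) ≤ (m : ℝ) := by exact_mod_cast hm
    linarith
  have hm1 : ((m : ℝ) + 1) ≠ 0 := by positivity
  have hm2 : ((m : ℝ) + 2) ≠ 0 := by positivity
  have hm3 : ((m : ℝ) - 1 + 1) ≠ 0 := by rw [sub_add_cancel]; exact hm0
  have hm4 : ((m : ℝ) - 1 + 2) ≠ 0 := by
    have h : (1 : ℝ) ≤ (m : ℝ) := by exact_mod_cast hm
    linarith
  field_simp
  ring

/-! ### Main theorem -/

/-- The Appell property: `(1/2) D̄ Q_m = m Q_{m-1}` for every `m ≥ 1`. -/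
theorem appellQ_appell_property (m : ℕ) (hm : 1 ≤ m) (x : ℍ[ℝ]) :
    (1 / 2 : ℝ) • fueterDBar (appellQ m) x = (m : ℝ) • appellQ (m - 1) x := by
  unfold fueterDBar
  rw [fderiv_appellQ_apply m x 1, fderiv_appellQ_apply m x e1, fderiv_appellQ_apply m x e2,
    fderiv_appellQ_apply m x e3]
  rw [Finset.mul_sum, Finset.mul_sum, Finset.mul_sum, ← Finset.sum_sub_distrib,
    ← Finset.sum_sub_distrib, ← Finset.sum_sub_distrib, Finset.smul_sum]
  have hterm : ∀ j ∈ range (m + 1),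
      (1 / 2 : ℝ) • (appellT m j • (pPart m j x 1 + sPart m j x 1)
        - e1 * (appellT m j • (pPart m j x e1 + sPart m j x e1))
        - e2 * (appellT m j • (pPart m j x e2 + sPart m j x e2))
        - e3 * (appellT m j • (pPart m j x e3 + sPart m j x e3)))
      = appellT m j • Zt m j x := by
    intro j hj
    have hj' : j ≤ m := by have := mem_range.mp hj; omega
    rw [mul_smul_comm, mul_smul_comm, mul_smul_comm, ← smul_sub, ← smul_sub, ← smul_sub,
      key m j x hj', ← two_smul ℝ (Zt m j x), smul_smul, smul_smul]
    congr 1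
    ring
  rw [Finset.sum_congr rfl hterm]
  have hZ : ∀ j ∈ range (m + 1), appellT m j • Zt m j x
      = appellT m j • ((m - j) • (x ^ (m - j - 1) * (star x) ^ j))
        + (∑ i ∈ range (m - j), appellT m j • (x ^ (m - j - 1 - i) * (star x) ^ (i + j)))
        - ∑ i ∈ range j, appellT m j • (x ^ i * (star x) ^ (m - 1 - i)) := by
    intro j hj
    rw [Zt, smul_sub, Finset.sum_add_distrib, Finset.sum_const, Finset.card_range, smul_add,
      Finset.smul_sum, Finset.smul_sum]
  rw [Finset.sum_congr rfl hZ, Finset.sum_sub_distrib, Finset.sum_add_distrib]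
  have hA1 : ∑ j ∈ range (m + 1), appellT m j • ((m - j) • (x ^ (m - j - 1) * (star x) ^ j))
      = ∑ q ∈ range m, (appellT m q * ((m - q : ℕ) : ℝ)) • (x ^ (m - 1 - q) * (star x) ^ q) := by
    rw [Finset.sum_range_succ]
    simp only [Nat.sub_self, zero_smul, smul_zero, add_zero]
    refine Finset.sum_congr rfl fun q hq => ?_
    have hq' : q < m := mem_range.mp hq
    rw [show m - q - 1 = m - 1 - q from by omega, ← Nat.cast_smul_eq_nsmul ℝ (m - q),
      smul_smul]
  have hA2 : ∑ j ∈ range (m + 1), ∑ i ∈ range (m - j),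
        appellT m j • (x ^ (m - j - 1 - i) * (star x) ^ (i + j))
      = ∑ q ∈ range m, (∑ j ∈ range (q + 1), appellT m j)
          • (x ^ (m - 1 - q) * (star x) ^ q) := by
    rw [Finset.sum_range_succ]
    simp only [Nat.sub_self, Finset.range_zero, Finset.sum_empty, add_zero]
    rw [tri m (fun j i => appellT m j • (x ^ (m - j - 1 - i) * (star x) ^ (i + j)))]
    refine Finset.sum_congr rfl fun q hq => ?_
    have hq' : q < m := mem_range.mp hq
    rw [Finset.sum_smul]
    refine Finset.sum_congr rfl fun j hj => ?_
    have hj' : j < q + 1 := mem_range.mp hj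
    rw [show m - j - 1 - (q - j) = m - 1 - q from by omega, show q - j + j = q from by omega]
  have hA3 : ∑ j ∈ range (m + 1), ∑ i ∈ range j, appellT m j • (x ^ i * (star x) ^ (m - 1 - i))
      = ∑ q ∈ range m, (∑ k ∈ range (q + 1), appellT m (m - q + k))
          • (x ^ (m - 1 - q) * (star x) ^ q) := by
    rw [tri2 m (fun j i => appellT m j • (x ^ i * (star x) ^ (m - 1 - i)))]
    have step1 : ∀ i ∈ range m, ∑ k ∈ range (m - i), appellT m (i + 1 + k)
          • (x ^ i * (star x) ^ (m - 1 - i))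
        = (∑ k ∈ range (m - i), appellT m (i + 1 + k)) • (x ^ i * (star x) ^ (m - 1 - i)) :=
      fun i _ => (Finset.sum_smul).symm
    rw [Finset.sum_congr rfl step1,
      ← Finset.sum_range_reflect
        (fun i => (∑ k ∈ range (m - i), appellT m (i + 1 + k))
          • (x ^ i * (star x) ^ (m - 1 - i))) m]
    refine Finset.sum_congr rfl fun q hq => ?_
    have hq' : q < m := mem_range.mp hq
    rw [show m - (m - 1 - q) = q + 1 from by omega, show m - 1 - (m - 1 - q) = q from by omega]
    congr 1
    refine Finset.sum_congr rfl fun k hk => ?_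
    rw [show m - 1 - q + 1 + k = m - q + k from by omega]
  rw [hA1, hA2, hA3]
  have hR : (m : ℝ) • appellQ (m - 1) x
      = ∑ q ∈ range m, ((m : ℝ) * appellT (m - 1) q)
          • (x ^ (m - 1 - q) * (star x) ^ q) := by
    rw [appellQ, Finset.smul_sum, show m - 1 + 1 = m from by omega]
    exact Finset.sum_congr rfl fun q hq => by rw [smul_smul]
  rw [hR, ← Finset.sum_add_distrib, ← Finset.sum_sub_distrib]
  refine Finset.sum_congr rfl fun q hq => ?_
  rw [← add_smul, ← sub_smul]
  congr 1
  exact coeff_id m q hm (mem_range.mp hq)
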